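/- arXiv:2003.12342 — 3 statements merged into one kernel-verified Lean document; each statement's English description precedes it below -/
import Mathlib

section
/- Let ξ>0, c>0 and let f:ℝ→ℝ be twice continuously differentiable. Define u(x,t) = (2/Beta(ξ,1/2))·∫_0^1 (1-y²)^{ξ-1}·(f(x+yct)+f(x-yct))/2 dy for t>0. Then u satisfies the one-dimensional EPD equation ∂²u/∂t² + (2ξ/t)∂u/∂t = c²∂²u/∂x² for all x∈ℝ and t>0. -/
open MeasureTheory Real Set

noncomputable def betaFn (a b : ℝ) : ℝ := Real.Gamma a * Real.Gamma b / Real.Gamma (a + b)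

lemma aux_w_int {ξ : ℝ} (hξ : 0 < ξ) :
    IntervalIntegrable (fun y : ℝ => (1 - y ^ 2) ^ (ξ - 1)) volume 0 1 := by
  have h01 : (0:ℝ) ≤ 1 := zero_le_one
  have h1 : IntervalIntegrable (fun y : ℝ => (1 - y) ^ (ξ - 1)) volume 0 1 := by
    have h := (intervalIntegral.intervalIntegrable_rpow' (a := 0) (b := 1)
      (r := ξ - 1) (by linarith)).comp_sub_left 1
    simpa using h.symm
  have h2 : IntervalIntegrable (fun y : ℝ => (1 - y) ^ (ξ - 1) * (1 + y) ^ (ξ - 1))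
      volume 0 1 := by
    apply h1.mul_continuousOn
    intro y hy
    rw [uIcc_of_le h01] at hy
    exact ((continuous_const.add continuous_id).continuousAt.rpow_const
      (Or.inl (by simp; nlinarith [hy.1]))).continuousWithinAt
  rw [intervalIntegrable_iff_integrableOn_Ioc_of_le h01] at h2 ⊢
  refine h2.congr_fun (fun y hy => ?_) measurableSet_Ioc
  have h : (1 : ℝ) - y ^ 2 = (1 - y) * (1 + y) := by ring
  rw [h, Real.mul_rpow (by nlinarith [hy.2]) (by nlinarith [hy.1])]

lemma aux_pow_cont {ξ : ℝ} (hξ : 0 < ξ) : Continuous fun y : ℝ => (1 - y ^ 2) ^ ξ := by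
  rw [continuous_iff_continuousAt]
  intro y
  exact ((continuous_const.sub (continuous_pow 2)).continuousAt).rpow_const (Or.inr hξ.le)

lemma aux_DUI (w : ℝ → ℝ) (hw : IntervalIntegrable w volume 0 1)
    (G G' : ℝ → ℝ → ℝ)
    (hG'c : Continuous fun p : ℝ × ℝ => G' p.1 p.2)
    (hGs : ∀ s, Continuous fun y => G s y)
    (hG : ∀ s y, HasDerivAt (fun s' => G s' y) (G' s y) s) (s₀ : ℝ) :
    HasDerivAt (fun s => ∫ y in (0:ℝ)..1, w y * G s y)
      (∫ y in (0:ℝ)..1, w y * G' s₀ y) s₀ := by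
  have h01 : (0:ℝ) ≤ 1 := zero_le_one
  have hwInt : IntegrableOn w (Ioc 0 1) volume :=
    (intervalIntegrable_iff_integrableOn_Ioc_of_le h01).1 hw
  obtain ⟨C, hC⟩ := ((isCompact_Icc (a := s₀ - 1) (b := s₀ + 1)).prod
    (isCompact_Icc (a := (0:ℝ)) (b := 1))).exists_bound_of_continuousOn hG'c.continuousOn
  have key := hasDerivAt_integral_of_dominated_loc_of_deriv_le
    (μ := volume.restrict (Ioc (0:ℝ) 1)) (x₀ := s₀)
    (F := fun s y => w y * G s y) (F' := fun s y => w y * G' s y)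
    (bound := fun y => |w y| * (|C| + 1)) (s := Metric.ball s₀ 1) (Metric.ball_mem_nhds s₀ one_pos)
    (Filter.Eventually.of_forall fun s =>
      hwInt.aestronglyMeasurable.mul (hGs s).aestronglyMeasurable)
    ((intervalIntegrable_iff_integrableOn_Ioc_of_le h01).1
      (hw.mul_continuousOn (hGs s₀).continuousOn))
    (hwInt.aestronglyMeasurable.mul
      ((hG'c.comp (continuous_const.prodMk continuous_id)).aestronglyMeasurable))
    ?_ ?_ ?_
  · have := key.2
    simpa only [intervalIntegral.integral_of_le h01] using this
  · refine (ae_restrict_iff' measurableSet_Ioc).2 (Filter.Eventually.of_forall ?_)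
    intro y hy s hs
    have hmem : (s, y) ∈ Icc (s₀ - 1) (s₀ + 1) ×ˢ Icc (0:ℝ) 1 := by
      constructor
      · have h := Metric.mem_ball.mp hs
        rw [Real.dist_eq] at h
        constructor <;> [linarith [(abs_lt.mp h).1]; linarith [(abs_lt.mp h).2]]
      · exact ⟨hy.1.le, hy.2⟩
    have hb := hC _ hmem
    simp only [Real.norm_eq_abs] at hb ⊢
    rw [abs_mul]
    have h : |G' s y| ≤ |C| + 1 := le_trans hb (by cases abs_cases C <;> linarith)
    exact mul_le_mul_of_nonneg_left h (abs_nonneg _)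
  · have := (hwInt.norm.mul_const (|C| + 1))
    simpa [Real.norm_eq_abs] using this
  · exact Filter.Eventually.of_forall fun y => fun s _ => (hG s y).const_mul (w y)

lemma aux_IBP {ξ : ℝ} (hξ : 0 < ξ) (p q : ℝ → ℝ) (hpq : ∀ r, HasDerivAt p (q r) r)
    (hpc : Continuous p) (hqc : Continuous q) (hp0 : p 0 = 0) :
    ∫ y in (0:ℝ)..1,
      (ξ * (1 - y ^ 2) ^ (ξ - 1) * (-(2 * y)) * p y + (1 - y ^ 2) ^ ξ * q y) = 0 := by
  have h01 : (0:ℝ) ≤ 1 := zero_le_one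
  set Ψ : ℝ → ℝ := fun y => (1 - y ^ 2) ^ ξ * p y with hΨ
  have hcont : ContinuousOn Ψ (Icc 0 1) := ((aux_pow_cont hξ).mul hpc).continuousOn
  have hderiv : ∀ y ∈ Ioo (0:ℝ) 1, HasDerivWithinAt Ψ
      (ξ * (1 - y ^ 2) ^ (ξ - 1) * (-(2 * y)) * p y + (1 - y ^ 2) ^ ξ * q y) (Ioi y) y := by
    intro y hy
    have hpos : (0:ℝ) < 1 - y ^ 2 := by nlinarith [hy.1, hy.2]
    have hin : HasDerivAt (fun y : ℝ => 1 - y ^ 2) (-(2 * y)) y := by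
      simpa using ((hasDerivAt_pow 2 y).const_sub 1)
    have h1 : HasDerivAt (fun y : ℝ => (1 - y ^ 2) ^ ξ)
        (-(2 * y) * ξ * (1 - y ^ 2) ^ (ξ - 1)) y :=
      hin.rpow_const (Or.inl hpos.ne')
    have h := (h1.mul (hpq y))
    refine (HasDerivAt.hasDerivWithinAt ?_)
    refine h.congr_deriv ?_
    try ring
  have hint : IntervalIntegrable
      (fun y => ξ * (1 - y ^ 2) ^ (ξ - 1) * (-(2 * y)) * p y + (1 - y ^ 2) ^ ξ * q y)
      volume 0 1 := by
    refine IntervalIntegrable.add ?_ (((aux_pow_cont hξ).mul hqc).intervalIntegrable 0 1)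
    have h := (aux_w_int hξ).mul_continuousOn
      (g := fun y => ξ * (-(2 * y)) * p y) (by fun_prop)
    have heq : (fun y : ℝ => (1 - y ^ 2) ^ (ξ - 1) * (ξ * (-(2 * y)) * p y))
        = fun y => ξ * (1 - y ^ 2) ^ (ξ - 1) * (-(2 * y)) * p y := by
      funext y; ring
    rwa [heq] at h
  have h := intervalIntegral.integral_eq_sub_of_hasDeriv_right_of_le h01 hcont hderiv hint
  rw [h, hΨ]
  simp [Real.zero_rpow hξ.ne', hp0]

theorem stmt_6 (ξ c : ℝ) (hξ : 0 < ξ) (hc : 0 < c) (f : ℝ → ℝ) (hf : ContDiff ℝ 2 f)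
    (u : ℝ → ℝ → ℝ)
    (hu : ∀ x t, u x t = (2 / betaFn ξ (1 / 2)) *
      ∫ y in (0:ℝ)..1, (1 - y ^ 2) ^ (ξ - 1) * ((f (x + y * c * t) + f (x - y * c * t)) / 2)) :
    ∀ x t, 0 < t →
      deriv (deriv (fun s => u x s)) t + (2 * ξ / t) * deriv (fun s => u x s) t
        = c ^ 2 * deriv (deriv (fun y => u y t)) x := by
  intro x t ht
  -- basic facts about f
  have hP := (contDiff_succ_iff_deriv (n := 1)).mp (by norm_num at hf ⊢; exact hf)
  set f1 := deriv f with hf1def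
  set f2 := deriv f1 with hf2def
  have hd1 : Differentiable ℝ f := hP.1
  have hf1 : ContDiff ℝ 1 f1 := hP.2.2
  have hd2 : Differentiable ℝ f1 := hf1.differentiable one_ne_zero
  have hf2c : Continuous f2 := (contDiff_one_iff_deriv.mp hf1).2
  have hfc : Continuous f := hf.continuous
  have hf1c : Continuous f1 := hf1.continuous
  have hder1 : ∀ z, HasDerivAt f (f1 z) z := fun z => (hd1 z).hasDerivAt
  have hder2 : ∀ z, HasDerivAt f1 (f2 z) z := fun z => (hd2 z).hasDerivAt
  -- abbreviations
  set K : ℝ := 2 / betaFn ξ (1 / 2) with hK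
  set w : ℝ → ℝ := fun y => (1 - y ^ 2) ^ (ξ - 1) with hwdef
  have hw : IntervalIntegrable w volume 0 1 := aux_w_int hξ
  set G₀ : ℝ → ℝ → ℝ := fun s y => (f (x + y * c * s) + f (x - y * c * s)) / 2 with hG₀
  set G₁ : ℝ → ℝ → ℝ := fun s y => ((f1 (x + y * c * s) - f1 (x - y * c * s)) / 2) * (y * c)
    with hG₁
  set G₂ : ℝ → ℝ → ℝ := fun s y => ((f2 (x + y * c * s) + f2 (x - y * c * s)) / 2) * (y * c) ^ 2
    with hG₂
  set H₀ : ℝ → ℝ → ℝ := fun z y => (f (z + y * c * t) + f (z - y * c * t)) / 2 with hH₀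
  set H₁ : ℝ → ℝ → ℝ := fun z y => (f1 (z + y * c * t) + f1 (z - y * c * t)) / 2 with hH₁
  set H₂ : ℝ → ℝ → ℝ := fun z y => (f2 (z + y * c * t) + f2 (z - y * c * t)) / 2 with hH₂
  -- inner derivatives (t-direction)
  have hinp : ∀ (y s : ℝ), HasDerivAt (fun s : ℝ => x + y * c * s) (y * c) s := fun y s => by
    simpa using ((hasDerivAt_id s).const_mul (y * c)).const_add x
  have hinm : ∀ (y s : ℝ), HasDerivAt (fun s : ℝ => x - y * c * s) (-(y * c)) s := fun y s => by
    simpa using ((hasDerivAt_id s).const_mul (y * c)).const_sub x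
  have hG01 : ∀ s y, HasDerivAt (fun s' => G₀ s' y) (G₁ s y) s := by
    intro s y
    have hp := (hder1 (x + y * c * s)).comp s (hinp y s)
    have hm := (hder1 (x - y * c * s)).comp s (hinm y s)
    have h := (hp.add hm).div_const 2
    simp only [hG₀, hG₁, Function.comp_def]
    refine h.congr_deriv ?_
    try ring
  have hG12 : ∀ s y, HasDerivAt (fun s' => G₁ s' y) (G₂ s y) s := by
    intro s y
    have hp := (hder2 (x + y * c * s)).comp s (hinp y s)
    have hm := (hder2 (x - y * c * s)).comp s (hinm y s)
    have h := ((hp.sub hm).div_const 2).mul_const (y * c)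
    simp only [hG₁, hG₂, Function.comp_def]
    refine h.congr_deriv ?_
    try ring
  -- inner derivatives (x-direction)
  have hxp : ∀ (y z : ℝ), HasDerivAt (fun z : ℝ => z + y * c * t) 1 z := fun y z => by
    simpa using (hasDerivAt_id z).add_const (y * c * t)
  have hxm : ∀ (y z : ℝ), HasDerivAt (fun z : ℝ => z - y * c * t) 1 z := fun y z => by
    simpa using (hasDerivAt_id z).sub_const (y * c * t)
  have hH01 : ∀ z y, HasDerivAt (fun z' => H₀ z' y) (H₁ z y) z := by
    intro z y
    have hp := (hder1 (z + y * c * t)).comp z (hxp y z)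
    have hm := (hder1 (z - y * c * t)).comp z (hxm y z)
    have h := (hp.add hm).div_const 2
    simp only [hH₀, hH₁, Function.comp_def]
    refine h.congr_deriv ?_
    try ring
  have hH12 : ∀ z y, HasDerivAt (fun z' => H₁ z' y) (H₂ z y) z := by
    intro z y
    have hp := (hder2 (z + y * c * t)).comp z (hxp y z)
    have hm := (hder2 (z - y * c * t)).comp z (hxm y z)
    have h := (hp.add hm).div_const 2
    simp only [hH₁, hH₂, Function.comp_def]
    refine h.congr_deriv ?_
    try ring
  -- continuity facts
  have hG₀s : ∀ s, Continuous fun y => G₀ s y := fun s => by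
    simp only [hG₀]; fun_prop
  have hG₁c : Continuous fun pr : ℝ × ℝ => G₁ pr.1 pr.2 := by
    simp only [hG₁]; fun_prop
  have hG₁s : ∀ s, Continuous fun y => G₁ s y := fun s => by
    simp only [hG₁]; fun_prop
  have hG₂c : Continuous fun pr : ℝ × ℝ => G₂ pr.1 pr.2 := by
    simp only [hG₂]; fun_prop
  have hH₀s : ∀ z, Continuous fun y => H₀ z y := fun z => by
    simp only [hH₀]; fun_prop
  have hH₁c : Continuous fun pr : ℝ × ℝ => H₁ pr.1 pr.2 := by
    simp only [hH₁]; fun_prop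
  have hH₁s : ∀ z, Continuous fun y => H₁ z y := fun z => by
    simp only [hH₁]; fun_prop
  have hH₂c : Continuous fun pr : ℝ × ℝ => H₂ pr.1 pr.2 := by
    simp only [hH₂]; fun_prop
  -- derivative computations in t
  have hUeq : (fun s => u x s) = fun s => K * ∫ y in (0:ℝ)..1, w y * G₀ s y := by
    funext s
    rw [hu x s]
  have hU1 : ∀ s, HasDerivAt (fun s => u x s) (K * ∫ y in (0:ℝ)..1, w y * G₁ s y) s := by
    intro s
    rw [hUeq]
    exact (aux_DUI w hw G₀ G₁ hG₁c hG₀s hG01 s).const_mul K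
  have hderivU : deriv (fun s => u x s) = fun s => K * ∫ y in (0:ℝ)..1, w y * G₁ s y :=
    funext fun s => (hU1 s).deriv
  have hU2 : deriv (deriv (fun s => u x s)) t = K * ∫ y in (0:ℝ)..1, w y * G₂ t y := by
    rw [hderivU]
    exact ((aux_DUI w hw G₁ G₂ hG₂c hG₁s hG12 t).const_mul K).deriv
  -- derivative computations in x
  have hXeq : (fun z => u z t) = fun z => K * ∫ y in (0:ℝ)..1, w y * H₀ z y := by
    funext z
    rw [hu z t]
  have hX1 : ∀ z, HasDerivAt (fun z => u z t) (K * ∫ y in (0:ℝ)..1, w y * H₁ z y) z := by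
    intro z
    rw [hXeq]
    exact (aux_DUI w hw H₀ H₁ hH₁c hH₀s hH01 z).const_mul K
  have hderivX : deriv (fun z => u z t) = fun z => K * ∫ y in (0:ℝ)..1, w y * H₁ z y :=
    funext fun z => (hX1 z).deriv
  have hX2 : deriv (deriv (fun y => u y t)) x = K * ∫ y in (0:ℝ)..1, w y * H₂ x y := by
    rw [hderivX]
    exact ((aux_DUI w hw H₁ H₂ hH₂c hH₁s hH12 x).const_mul K).deriv
  rw [hU2, hX2]
  have hdu : deriv (fun s => u x s) t = K * ∫ y in (0:ℝ)..1, w y * G₁ t y := (hU1 t).deriv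
  rw [hdu]
  -- integration by parts
  set p : ℝ → ℝ := fun y => (f1 (x + y * c * t) - f1 (x - y * c * t)) / 2 with hpdef
  set q : ℝ → ℝ := fun y =>
    (f2 (x + y * c * t) * (c * t) - f2 (x - y * c * t) * (-(c * t))) / 2 with hqdef
  have hipp : ∀ y : ℝ, HasDerivAt (fun y : ℝ => x + y * c * t) (c * t) y := fun y => by
    simpa using (((hasDerivAt_id y).mul_const c).mul_const t).const_add x
  have hipm : ∀ y : ℝ, HasDerivAt (fun y : ℝ => x - y * c * t) (-(c * t)) y := fun y => by
    have h := (((hasDerivAt_id y).mul_const c).mul_const t).neg.const_add x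
    simpa [sub_eq_add_neg] using h
  have hpq : ∀ y, HasDerivAt p (q y) y := by
    intro y
    have hp' := (hder2 (x + y * c * t)).comp y (hipp y)
    have hm' := (hder2 (x - y * c * t)).comp y (hipm y)
    have h := (hp'.sub hm').div_const 2
    simp only [hpdef, hqdef, Function.comp_def]
    exact h
  have hpc : Continuous p := by simp only [hpdef]; fun_prop
  have hqc : Continuous q := by simp only [hqdef]; fun_prop
  have hp0 : p 0 = 0 := by simp [hpdef]
  have hE := aux_IBP hξ p q hpq hpc hqc hp0
  -- rewrite the IBP integrand
  have hEq : EqOn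
      (fun y => ξ * (1 - y ^ 2) ^ (ξ - 1) * (-(2 * y)) * p y + (1 - y ^ 2) ^ ξ * q y)
      (fun y => (-(2 * ξ)) * (w y * (y * p y))
        + (c * t) * (w y * H₂ x y - w y * (y ^ 2 * H₂ x y))) (uIcc 0 1) := by
    intro y hy
    rw [uIcc_of_le zero_le_one] at hy
    have key : (1 - y ^ 2) ^ ξ = w y * (1 - y ^ 2) := by
      rcases eq_or_lt_of_le (by nlinarith [hy.1, hy.2] : (0:ℝ) ≤ 1 - y ^ 2) with h0 | hpos
      · rw [← h0, Real.zero_rpow hξ.ne', mul_zero]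
      · rw [hwdef]
        simp only
        have h2 : (1 - y ^ 2) ^ ξ = (1 - y ^ 2) ^ (ξ - 1 + 1) := by norm_num
        rw [h2, Real.rpow_add hpos, Real.rpow_one]
    simp only
    rw [key]
    simp only [hwdef, hH₂, hpdef, hqdef]
    ring
  rw [intervalIntegral.integral_congr hEq] at hE
  -- split the integral
  have i1 : IntervalIntegrable (fun y => w y * (y * p y)) volume 0 1 :=
    hw.mul_continuousOn (by fun_prop)
  have i0 : IntervalIntegrable (fun y => w y * H₂ x y) volume 0 1 :=
    hw.mul_continuousOn (Continuous.continuousOn (by simp only [hH₂]; fun_prop))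
  have i2 : IntervalIntegrable (fun y => w y * (y ^ 2 * H₂ x y)) volume 0 1 :=
    hw.mul_continuousOn (Continuous.continuousOn (by simp only [hH₂]; fun_prop))
  rw [intervalIntegral.integral_add (i1.const_mul _) ((i0.sub i2).const_mul _),
    intervalIntegral.integral_const_mul, intervalIntegral.integral_const_mul,
    intervalIntegral.integral_sub i0 i2] at hE
  -- rewrite the goal integrals
  have hA : (∫ y in (0:ℝ)..1, w y * G₂ t y)
      = c ^ 2 * ∫ y in (0:ℝ)..1, w y * (y ^ 2 * H₂ x y) := by
    rw [← intervalIntegral.integral_const_mul]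
    apply intervalIntegral.integral_congr
    intro y _
    simp only [hG₂, hH₂, hwdef]
    ring
  have hB : (∫ y in (0:ℝ)..1, w y * G₁ t y)
      = c * ∫ y in (0:ℝ)..1, w y * (y * p y) := by
    rw [← intervalIntegral.integral_const_mul]
    apply intervalIntegral.integral_congr
    intro y _
    simp only [hG₁, hpdef, hwdef]
    ring
  rw [hA, hB]
  set I0 := ∫ y in (0:ℝ)..1, w y * H₂ x y
  set I1 := ∫ y in (0:ℝ)..1, w y * (y * p y)
  set I2 := ∫ y in (0:ℝ)..1, w y * (y ^ 2 * H₂ x y)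
  have ht' : t ≠ 0 := ht.ne'
  field_simp
  linear_combination (-2 * (betaFn ξ (1 / 2))⁻¹) * hE
end

section
/- Let ν∈(0,1/3)∖{1/4} and set C₁ = (1/2)·(Γ(1-3ν)/Γ(1-4ν))·(Γ(1-2ν)/Γ(1-ν)) and C₂ = (1/4)·(Γ(1-3ν)/Γ(1-4ν)). Then u(x,t) = C₁ t^{-ν} - C₂ x² t^{-3ν} satisfies the nonlinear time-fractional equation t^{-2ν}·∂^ν u/∂t^ν + t^{-ν}·∂²u/∂x² + (∂u/∂x)² = 0 for all x∈ℝ and t>0. -/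
open MeasureTheory Real Set

lemma beta_int_half {b τ : ℝ} (a : ℝ) (ha : 0 < a) (hτ : 0 < τ) :
    IntervalIntegrable (fun x => x ^ (a-1) * (τ - x) ^ (b-1)) volume 0 (τ/2) := by
  apply (intervalIntegral.intervalIntegrable_rpow' (by linarith)).mul_continuousOn
  apply ContinuousOn.rpow_const (continuous_const.sub continuous_id).continuousOn
  intro x hx
  rw [uIcc_of_le (by positivity)] at hx
  left
  have hx2 : x ≤ τ/2 := hx.2
  intro h
  have : τ - x = 0 := h
  linarith

lemma beta_integrable {a b τ : ℝ} (ha : 0 < a) (hb : 0 < b) (hτ : 0 < τ) :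
    IntervalIntegrable (fun x => x ^ (a-1) * (τ - x) ^ (b-1)) volume 0 τ := by
  refine (beta_int_half a ha hτ).trans ?_
  have h2 := (beta_int_half (b := a) b hb hτ).comp_sub_left τ
  have e1 : τ - τ/2 = τ/2 := by ring
  have e2 : τ - 0 = τ := by ring
  rw [e1, e2] at h2
  have e3 : (fun x => (τ - x) ^ (b-1) * (τ - (τ - x)) ^ (a-1))
      = (fun x => x ^ (a-1) * (τ - x) ^ (b-1)) := by
    funext x
    rw [show τ - (τ - x) = x by ring]
    ring
  rw [e3] at h2
  exact h2.symm

lemma beta_value {a b τ : ℝ} (ha : 0 < a) (hb : 0 < b) (hτ : 0 < τ) :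
    ∫ x in (0:ℝ)..τ, x ^ (a-1) * (τ - x) ^ (b-1)
      = Real.Gamma a * Real.Gamma b / Real.Gamma (a+b) * τ ^ (a+b-1) := by
  have key := Complex.betaIntegral_scaled (a:ℂ) (b:ℂ) hτ
  have hGamma := Complex.Gamma_mul_Gamma_eq_betaIntegral (s := (a:ℂ)) (t := (b:ℂ))
    (by simpa using ha) (by simpa using hb)
  have habpos : (0:ℝ) < Real.Gamma (a+b) := Real.Gamma_pos_of_pos (by linarith)
  have habne : (Complex.Gamma ((a:ℂ) + b)) ≠ 0 := by
    rw [show ((a:ℂ) + b) = ((a+b : ℝ) : ℂ) by push_cast; ring, Complex.Gamma_ofReal]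
    exact_mod_cast habpos.ne'
  have hB : Complex.betaIntegral (a:ℂ) (b:ℂ)
      = ((Real.Gamma a * Real.Gamma b / Real.Gamma (a+b) : ℝ) : ℂ) := by
    have h0 : Complex.betaIntegral (a:ℂ) (b:ℂ)
        = Complex.Gamma (a:ℂ) * Complex.Gamma (b:ℂ) / Complex.Gamma ((a:ℂ)+b) := by
      rw [eq_div_iff habne, mul_comm, ← hGamma]
    rw [h0, show ((a:ℂ) + b) = ((a+b : ℝ) : ℂ) by push_cast; ring,
      Complex.Gamma_ofReal, Complex.Gamma_ofReal, Complex.Gamma_ofReal]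
    push_cast
    ring
  have hcongr : (∫ x in (0:ℝ)..τ, (x:ℂ) ^ ((a:ℂ) - 1) * ((τ:ℂ) - x) ^ ((b:ℂ) - 1))
      = ((∫ x in (0:ℝ)..τ, x ^ (a-1) * (τ - x) ^ (b-1) : ℝ) : ℂ) := by
    rw [← intervalIntegral.integral_ofReal]
    apply intervalIntegral.integral_congr
    intro x hx
    rw [uIcc_of_le hτ.le] at hx
    simp only [Complex.ofReal_mul]
    rw [Complex.ofReal_cpow hx.1,
      Complex.ofReal_cpow (by linarith [hx.2] : (0:ℝ) ≤ τ - x)]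
    push_cast
    ring
  rw [hcongr, hB] at key
  have hpow : ((τ:ℂ)) ^ ((a:ℂ) + b - 1) = ((τ ^ (a+b-1) : ℝ) : ℂ) := by
    rw [Complex.ofReal_cpow hτ.le]
    push_cast
    ring_nf
  rw [hpow] at key
  rw [← Complex.ofReal_mul, Complex.ofReal_inj] at key
  rw [key]; ring

/-- The Riemann–Liouville fractional derivative of order `ν > 0`. -/
noncomputable def RLderiv (ν : ℝ) (f : ℝ → ℝ) (t : ℝ) : ℝ :=
  iteratedDeriv ⌈ν⌉₊
    (fun τ => (1 / Real.Gamma ((⌈ν⌉₊ : ℝ) - ν)) *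
      ∫ s in (0:ℝ)..τ, (τ - s) ^ ((⌈ν⌉₊ : ℝ) - ν - 1) * f s) t

theorem stmt_8 (ν C₁ C₂ : ℝ) (hν : ν ∈ Set.Ioo (0:ℝ) (1/3)) (hν4 : ν ≠ 1/4)
    (hC₁ : C₁ = (1/2) * (Real.Gamma (1 - 3*ν) / Real.Gamma (1 - 4*ν)) *
      (Real.Gamma (1 - 2*ν) / Real.Gamma (1 - ν)))
    (hC₂ : C₂ = (1/4) * (Real.Gamma (1 - 3*ν) / Real.Gamma (1 - 4*ν)))
    (u : ℝ → ℝ → ℝ)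
    (hu : ∀ x t, u x t = C₁ * t ^ (-ν) - C₂ * x ^ 2 * t ^ (-(3*ν))) :
    ∀ x t, 0 < t →
      t ^ (-(2*ν)) * RLderiv ν (fun s => u x s) t
        + t ^ (-ν) * deriv (deriv (fun y => u y t)) x
        + (deriv (fun y => u y t) x) ^ 2 = 0 := by
  obtain ⟨hν0, hν3⟩ := hν
  intro x t ht
  have hν1 : ν < 1 := by linarith
  have h1ν : (0:ℝ) < 1 - ν := by linarith
  have h2ν : (0:ℝ) < 1 - 2*ν := by linarith
  have h3ν : (0:ℝ) < 1 - 3*ν := by linarith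
  have h4ν : (1:ℝ) - 4*ν ≠ 0 := by
    intro h; apply hν4; linarith
  have h4ν' : (-1:ℝ) < 1 - 4*ν := by linarith
  have hΓ1 : Real.Gamma (1 - ν) ≠ 0 := (Real.Gamma_pos_of_pos h1ν).ne'
  have hΓ2 : Real.Gamma (1 - 2*ν) ≠ 0 := (Real.Gamma_pos_of_pos h2ν).ne'
  have hΓ4 : Real.Gamma (1 - 4*ν) ≠ 0 := by
    apply Real.Gamma_ne_zero
    intro m
    rcases m with _ | k
    · simpa using h4ν
    · intro hEq
      push_cast at hEq
      linarith
  have hceil : ⌈ν⌉₊ = 1 := by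
    have hle : ⌈ν⌉₊ ≤ 1 := Nat.ceil_le.mpr (by norm_num; linarith)
    have hpos : 0 < ⌈ν⌉₊ := Nat.ceil_pos.mpr hν0
    omega
  set K₁ : ℝ := Real.Gamma (1-ν) * Real.Gamma (1-ν) / Real.Gamma (2-2*ν) with hK₁
  set K₂ : ℝ := Real.Gamma (1-3*ν) * Real.Gamma (1-ν) / Real.Gamma (2-4*ν) with hK₂
  set F : ℝ → ℝ := fun τ => 1 / Real.Gamma (1 - ν) *
      ∫ s in (0:ℝ)..τ, (τ - s) ^ (-ν) * u x s with hF
  set G : ℝ → ℝ := fun τ =>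
      (1 / Real.Gamma (1-ν)) * ((C₁ * K₁) * τ ^ (1-2*ν) - (C₂ * x^2 * K₂) * τ ^ (1-4*ν)) with hG
  have hRL : RLderiv ν (fun s => u x s) t = deriv F t := by
    rw [RLderiv, hceil, iteratedDeriv_one]
    simp only [Nat.cast_one, hF]
    simp only [show (1:ℝ) - ν - 1 = -ν from by ring]
  have hFG : F =ᶠ[nhds t] G := by
    filter_upwards [Ioi_mem_nhds ht] with τ hτ0
    have hτ0 : (0:ℝ) < τ := hτ0
    have i1 := beta_integrable h1ν h1ν hτ0
    have i2 := beta_integrable h3ν h1ν hτ0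
    have v1 := beta_value h1ν h1ν hτ0
    have v2 := beta_value h3ν h1ν hτ0
    have hint : (∫ s in (0:ℝ)..τ, (τ - s) ^ (-ν) * u x s)
        = C₁ * (∫ s in (0:ℝ)..τ, s ^ ((1-ν)-1) * (τ - s) ^ ((1-ν)-1))
          - (C₂ * x^2) * (∫ s in (0:ℝ)..τ, s ^ ((1-3*ν)-1) * (τ - s) ^ ((1-ν)-1)) := by
      have hsub := intervalIntegral.integral_sub (i1.const_mul C₁) (i2.const_mul (C₂ * x^2))
      rw [intervalIntegral.integral_const_mul, intervalIntegral.integral_const_mul] at hsub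
      rw [← hsub]
      apply intervalIntegral.integral_congr
      intro s _
      simp only [hu]
      simp only [show (1:ℝ)-ν-1 = -ν from by ring, show (1:ℝ)-3*ν-1 = -(3*ν) from by ring]
      ring
    simp only [hF, hG]
    rw [hint, v1, v2]
    rw [show (1:ℝ)-ν+(1-ν) = 2-2*ν from by ring, show (1:ℝ)-3*ν+(1-ν) = 2-4*ν from by ring,
      show (2:ℝ)-2*ν-1 = 1-2*ν from by ring, show (2:ℝ)-4*ν-1 = 1-4*ν from by ring,
      hK₁, hK₂]
    ring
  have hd1 : HasDerivAt (fun τ:ℝ => τ ^ (1-2*ν)) ((1-2*ν) * t ^ (1-2*ν-1)) t :=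
    Real.hasDerivAt_rpow_const (Or.inl ht.ne')
  have hd2 : HasDerivAt (fun τ:ℝ => τ ^ (1-4*ν)) ((1-4*ν) * t ^ (1-4*ν-1)) t :=
    Real.hasDerivAt_rpow_const (Or.inl ht.ne')
  have hGd : HasDerivAt G ((1 / Real.Gamma (1-ν)) *
      ((C₁ * K₁) * ((1-2*ν) * t ^ (1-2*ν-1)) - (C₂ * x^2 * K₂) * ((1-4*ν) * t ^ (1-4*ν-1)))) t :=
    ((hd1.const_mul (C₁ * K₁)).sub (hd2.const_mul (C₂ * x^2 * K₂))).const_mul (1 / Real.Gamma (1-ν))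
  have hderivF : deriv F t = (1 / Real.Gamma (1-ν)) *
      ((C₁ * K₁) * ((1-2*ν) * t ^ (1-2*ν-1)) - (C₂ * x^2 * K₂) * ((1-4*ν) * t ^ (1-4*ν-1))) := by
    rw [hFG.deriv_eq]
    exact hGd.deriv
  -- spatial derivatives
  have hfun : (fun y => u y t) = fun y => C₁ * t ^ (-ν) - C₂ * y ^ 2 * t ^ (-(3*ν)) :=
    funext fun y => hu y t
  have hder1 : ∀ y : ℝ, HasDerivAt (fun y : ℝ => C₁ * t ^ (-ν) - C₂ * y ^ 2 * t ^ (-(3*ν)))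
      (-(C₂ * (2*y) * t ^ (-(3*ν)))) y := by
    intro y
    have h1 : HasDerivAt (fun y:ℝ => C₂ * y ^ 2 * t ^ (-(3*ν))) (C₂ * (2*y) * t ^ (-(3*ν))) y := by
      have := ((hasDerivAt_pow 2 y).const_mul C₂).mul_const (t ^ (-(3*ν)))
      refine this.congr_deriv ?_
      push_cast
      ring
    have h2 := (hasDerivAt_const y (C₁ * t ^ (-ν))).sub h1
    simp only [zero_sub] at h2
    exact h2
  have hD1 : deriv (fun y => u y t) = fun y => -(C₂ * (2*y) * t ^ (-(3*ν))) := by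
    rw [hfun]; funext y; exact (hder1 y).deriv
  have hD2 : deriv (deriv (fun y => u y t)) x = -(C₂ * 2 * t ^ (-(3*ν))) := by
    rw [hD1]
    have he : (fun y:ℝ => -(C₂ * (2*y) * t ^ (-(3*ν)))) = fun y:ℝ => (-(C₂ * 2 * t ^ (-(3*ν)))) * y := by
      funext y; ring
    rw [he]
    have : HasDerivAt (fun y:ℝ => (-(C₂ * 2 * t ^ (-(3*ν)))) * y) (-(C₂ * 2 * t ^ (-(3*ν)))) x := by
      simpa using (hasDerivAt_id x).const_mul (-(C₂ * 2 * t ^ (-(3*ν))))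
    exact this.deriv
  rw [hRL, hderivF, hD2, hD1]
  -- power identities
  have e2 : t ^ (1-2*ν-1) = (t ^ (-ν)) ^ 2 := by
    rw [show (1:ℝ)-2*ν-1 = (-ν) * ((2:ℕ):ℝ) from by push_cast; ring,
      Real.rpow_mul ht.le, Real.rpow_natCast]
  have e4 : t ^ (1-4*ν-1) = (t ^ (-ν)) ^ 4 := by
    rw [show (1:ℝ)-4*ν-1 = (-ν) * ((4:ℕ):ℝ) from by push_cast; ring,
      Real.rpow_mul ht.le, Real.rpow_natCast]
  have e2' : t ^ (-(2*ν)) = (t ^ (-ν)) ^ 2 := by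
    rw [show -(2*ν) = (-ν) * ((2:ℕ):ℝ) from by push_cast; ring,
      Real.rpow_mul ht.le, Real.rpow_natCast]
  have e3' : t ^ (-(3*ν)) = (t ^ (-ν)) ^ 3 := by
    rw [show -(3*ν) = (-ν) * ((3:ℕ):ℝ) from by push_cast; ring,
      Real.rpow_mul ht.le, Real.rpow_natCast]
  have hg2 : Real.Gamma (2-2*ν) = (1-2*ν) * Real.Gamma (1-2*ν) := by
    rw [show (2:ℝ)-2*ν = (1-2*ν)+1 from by ring, Real.Gamma_add_one h2ν.ne']
  have hg4 : Real.Gamma (2-4*ν) = (1-4*ν) * Real.Gamma (1-4*ν) := by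
    rw [show (2:ℝ)-4*ν = (1-4*ν)+1 from by ring, Real.Gamma_add_one h4ν]
  rw [e2, e4, e2', e3', hK₁, hK₂, hg2, hg4, hC₁, hC₂]
  have h2ν' : (1:ℝ) - 2*ν ≠ 0 := h2ν.ne'
  have h2ν'' : (1:ℝ) - ν*2 ≠ 0 := by linarith
  have h4ν'' : (1:ℝ) - ν*4 ≠ 0 := by intro h; apply hν4; linarith
  have hΓ2' : Real.Gamma (1 - ν*2) ≠ 0 := by rwa [mul_comm]
  field_simp
  field_simp
  ring
end

section
/- For every μ > -1/2 and z ∈ ℝ, the Bessel function of the first kind satisfies Poisson's integral representation J_μ(z) = ((z/2)^μ/(√π·Γ(μ+1/2)))·∫_{-1}^{1}(1-w²)^{μ-1/2}·cos(zw) dw. -/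
open MeasureTheory Real Set

/-- The Bessel function of the first kind of (real) order `μ`, via its power series. -/
noncomputable def besselJ (μ z : ℝ) : ℝ :=
  ∑' k : ℕ, (-1) ^ k * (z / 2) ^ (μ + 2 * k) / (k.factorial * Real.Gamma (μ + k + 1))

lemma gamma_nat_add_half (k : ℕ) :
    Real.Gamma (k + 1/2) = Real.sqrt π * (2*k).factorial / (4^k * k.factorial) := by
  induction k with
  | zero => norm_num [Real.Gamma_one_half_eq]
  | succ n ih =>
    have h : ((n+1 : ℕ) : ℝ) + 1/2 = (n + 1/2) + 1 := by push_cast; ring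
    rw [h, Real.Gamma_add_one (by positivity), ih]
    have h1 : (2*(n+1)).factorial = (2*n+2) * ((2*n+1) * (2*n).factorial) := by
      have : 2*(n+1) = (2*n+1) + 1 := by ring
      rw [this, Nat.factorial_succ, Nat.factorial_succ]
    rw [h1, Nat.factorial_succ]
    push_cast
    field_simp
    ring

lemma rpow_split {μ : ℝ} (hμ : -1/2 < μ) (x : ℝ) (k : ℕ) :
    x ^ (μ + 2*(k:ℝ)) = x ^ μ * (x^2)^k := by
  rcases eq_or_ne x 0 with rfl | hx
  · rcases Nat.eq_zero_or_pos k with rfl | hk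
    · simp
    · have h1 : (1:ℝ) ≤ k := by exact_mod_cast hk
      have h2 : (0:ℝ) < μ + 2*k := by linarith
      rw [Real.zero_rpow h2.ne', zero_pow (by norm_num : 2 ≠ 0), zero_pow hk.ne', mul_zero]
  · rcases hx.lt_or_gt with hneg | hpos
    · rw [Real.rpow_def_of_neg hneg, Real.rpow_def_of_neg hneg μ]
      have hx2 : x^2 = |x|^2 := (sq_abs x).symm
      have habs : (0:ℝ) < |x| := abs_pos.mpr hx
      have hlog : Real.log x = Real.log |x| := (Real.log_abs x).symm
      have h3 : (x^2)^k = Real.exp (Real.log x * (2*k)) := by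
        rw [hx2, ← pow_mul, ← Real.exp_log habs, ← Real.exp_nat_mul, hlog]
        push_cast
        ring_nf
      have h4 : Real.cos ((μ + 2*k) * π) = Real.cos (μ * π) := by
        have : (μ + 2*k) * π = μ * π + k * (2 * π) := by ring
        rw [this, Real.cos_add_nat_mul_two_pi]
      rw [h4, mul_add, Real.exp_add, h3]
      ring
    · rw [Real.rpow_add hpos]
      congr 1
      rw [← Real.rpow_natCast (x^2) k, ← Real.rpow_natCast x 2, ← Real.rpow_mul hpos.le]
      push_cast
      ring_nf

lemma betaIntegrand_left {a : ℝ} (ha : 0 < a) (b : ℝ) :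
    IntervalIntegrable (fun x : ℝ => x^(a-1) * (1-x)^(b-1)) volume 0 (1/2) := by
  apply IntervalIntegrable.mul_continuousOn
  · exact intervalIntegral.intervalIntegrable_rpow' (by linarith)
  · apply continuousOn_of_forall_continuousAt
    intro x hx
    rw [uIcc_of_le (by norm_num : (0:ℝ) ≤ 1/2)] at hx
    have : (1:ℝ) - x ≠ 0 := by have := hx.2; intro h; nlinarith [hx.1]
    exact (Real.continuousAt_rpow_const _ _ (Or.inl this)).comp
      ((continuous_const.sub continuous_id).continuousAt)

lemma betaIntegrand_intInt {a b : ℝ} (ha : 0 < a) (hb : 0 < b) :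
    IntervalIntegrable (fun x : ℝ => x^(a-1) * (1-x)^(b-1)) volume 0 1 := by
  refine (betaIntegrand_left ha b).trans ?_
  have h := (betaIntegrand_left hb a).comp_sub_left 1
  norm_num at h
  exact h.symm.congr (fun x _ => by ring)

lemma real_beta {a b : ℝ} (ha : 0 < a) (hb : 0 < b) :
    ∫ x in (0:ℝ)..1, x^(a-1) * (1-x)^(b-1)
      = Real.Gamma a * Real.Gamma b / Real.Gamma (a+b) := by
  have key : Complex.betaIntegral a b = ((∫ x in (0:ℝ)..1, x^(a-1) * (1-x)^(b-1) : ℝ) : ℂ) := by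
    rw [Complex.betaIntegral, ← intervalIntegral.integral_ofReal]
    refine intervalIntegral.integral_congr fun x hx => ?_
    rw [uIcc_of_le (by norm_num : (0:ℝ) ≤ 1)] at hx
    push_cast
    rw [Complex.ofReal_cpow hx.1, Complex.ofReal_cpow (by linarith [hx.2] : (0:ℝ) ≤ 1 - x)]
    push_cast
    norm_num
  have hG := Complex.Gamma_mul_Gamma_eq_betaIntegral
    (by simpa using ha : 0 < Complex.re (a:ℂ)) (by simpa using hb : 0 < Complex.re (b:ℂ))
  rw [key] at hG
  have hab : ((a:ℂ) + b) = ((a+b : ℝ) : ℂ) := by push_cast; ring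
  rw [hab, Complex.Gamma_ofReal, Complex.Gamma_ofReal, Complex.Gamma_ofReal] at hG
  have : Real.Gamma a * Real.Gamma b
      = Real.Gamma (a+b) * ∫ x in (0:ℝ)..1, x^(a-1) * (1-x)^(b-1) := by
    exact_mod_cast hG
  rw [eq_div_iff (Real.Gamma_pos_of_pos (by linarith)).ne']
  linarith [this]

lemma sq_image : (fun x : ℝ => x^2) '' Ioo 0 1 = Ioo 0 1 := by
  ext y
  simp only [mem_image, mem_Ioo]
  constructor
  · rintro ⟨x, ⟨h1, h2⟩, rfl⟩
    exact ⟨by positivity, by nlinarith⟩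
  · rintro ⟨h1, h2⟩
    refine ⟨Real.sqrt y, ⟨Real.sqrt_pos.mpr h1, ?_⟩, Real.sq_sqrt h1.le⟩
    rw [show (1:ℝ) = Real.sqrt 1 by simp]
    exact Real.sqrt_lt_sqrt h1.le h2

lemma sq_injOn : InjOn (fun x : ℝ => x^2) (Ioo 0 1) := by
  intro x hx y hy h
  simp only [mem_Ioo] at hx hy
  simp only at h
  nlinarith [hx.1, hy.1]

lemma sq_deriv : ∀ x ∈ Ioo (0:ℝ) 1, HasDerivWithinAt (fun x : ℝ => x^2) (2*x) (Ioo 0 1) x := by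
  intro x _
  simpa using (hasDerivAt_pow 2 x).hasDerivWithinAt

lemma half_subst (μ : ℝ) (hμ : -1/2 < μ) (k : ℕ) :
    IntegrableOn (fun w : ℝ => (1-w^2)^(μ-1/2) * w^(2*k)) (Ioo 0 1) ∧
    ∫ w in Ioo (0:ℝ) 1, (1-w^2)^(μ-1/2) * w^(2*k)
      = (1/2) * ∫ t in Ioo (0:ℝ) 1, t^(((k:ℝ)+1/2)-1) * (1-t)^((μ+1/2)-1) := by
  set g : ℝ → ℝ := fun t => t^(((k:ℝ)+1/2)-1) * (1-t)^((μ+1/2)-1) with hg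
  have hpt : ∀ x ∈ Ioo (0:ℝ) 1,
      |2*x| • g (x^2) = 2 * ((1-x^2)^(μ-1/2) * x^(2*k)) := by
    intro x hx
    have hx0 : 0 < x := hx.1
    have e2 : (x^2 : ℝ)^(((k:ℝ)+1/2)-1) = x^(2*(k:ℝ)-1) := by
      rw [← Real.rpow_natCast x 2, ← Real.rpow_mul hx0.le]
      norm_num
      ring_nf
    have e3 : x * x^(2*(k:ℝ)-1) = x^(2*k) := by
      nth_rewrite 1 [← Real.rpow_one x]
      rw [← Real.rpow_add hx0, ← Real.rpow_natCast x (2*k)]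
      push_cast
      ring_nf
    rw [smul_eq_mul, abs_of_pos (by linarith), hg]
    simp only
    rw [e2]
    have : (μ+1/2)-1 = μ-1/2 := by ring
    rw [this]
    calc 2*x * (x^(2*(k:ℝ)-1) * (1-x^2)^(μ-1/2))
        = 2 * ((1-x^2)^(μ-1/2) * (x * x^(2*(k:ℝ)-1))) := by ring
      _ = 2 * ((1-x^2)^(μ-1/2) * x^(2*k)) := by rw [e3]
  have hg_int : IntegrableOn g (Ioo 0 1) :=
    (intervalIntegrable_iff_integrableOn_Ioo_of_le (by norm_num)).mp
      (betaIntegrand_intInt (by positivity : (0:ℝ) < (k:ℝ)+1/2) (by linarith : (0:ℝ) < μ+1/2))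
  have hiff := integrableOn_image_iff_integrableOn_abs_deriv_smul measurableSet_Ioo
      sq_deriv sq_injOn g
  rw [sq_image] at hiff
  have hint2 : IntegrableOn (fun x => |2*x| • g (x^2)) (Ioo 0 1) := hiff.mp hg_int
  have hint3 : IntegrableOn (fun x : ℝ => 2 * ((1-x^2)^(μ-1/2) * x^(2*k))) (Ioo 0 1) :=
    hint2.congr_fun hpt measurableSet_Ioo
  constructor
  · have h4 : IntegrableOn (fun x : ℝ => (1/2) * (2 * ((1-x^2)^(μ-1/2) * x^(2*k)))) (Ioo 0 1) :=
      hint3.const_mul (1/2)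
    refine h4.congr_fun (fun x _ => ?_) measurableSet_Ioo
    ring
  · have heq := integral_image_eq_integral_abs_deriv_smul measurableSet_Ioo
      sq_deriv sq_injOn g
    rw [sq_image] at heq
    rw [setIntegral_congr_fun measurableSet_Ioo hpt, MeasureTheory.integral_const_mul] at heq
    rw [heq]
    ring

lemma f_even (μ : ℝ) (k : ℕ) :
    (fun x : ℝ => (1-(-x)^2)^(μ-1/2) * (-x)^(2*k))
      = fun x : ℝ => (1-x^2)^(μ-1/2) * x^(2*k) := by
  funext x
  rw [neg_sq, pow_mul, pow_mul, neg_sq]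

lemma Ik_intInt (μ : ℝ) (hμ : -1/2 < μ) (k : ℕ) :
    IntervalIntegrable (fun w : ℝ => (1-w^2)^(μ-1/2) * w^(2*k)) volume (-1) 1 := by
  have h1 : IntervalIntegrable (fun w : ℝ => (1-w^2)^(μ-1/2) * w^(2*k)) volume 0 1 :=
    (intervalIntegrable_iff_integrableOn_Ioo_of_le (by norm_num)).mpr (half_subst μ hμ k).1
  have h2 := (IntervalIntegrable.iff_comp_neg (by simp)).mp h1
  rw [f_even] at h2
  norm_num at h2
  exact h2.symm.trans h1

lemma Ik_val (μ : ℝ) (hμ : -1/2 < μ) (k : ℕ) :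
    ∫ w in (-1:ℝ)..1, (1-w^2)^(μ-1/2) * w^(2*k)
      = Real.Gamma ((k:ℝ)+1/2) * Real.Gamma (μ+1/2) / Real.Gamma (μ+k+1) := by
  have h1 : IntervalIntegrable (fun w : ℝ => (1-w^2)^(μ-1/2) * w^(2*k)) volume 0 1 :=
    (intervalIntegrable_iff_integrableOn_Ioo_of_le (by norm_num)).mpr (half_subst μ hμ k).1
  have h2 : IntervalIntegrable (fun w : ℝ => (1-w^2)^(μ-1/2) * w^(2*k)) volume (-1) 0 := by
    have h2 := (IntervalIntegrable.iff_comp_neg (by simp)).mp h1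
    rw [f_even] at h2
    norm_num at h2
    exact h2.symm
  have hsym : ∫ w in (-1:ℝ)..0, (1-w^2)^(μ-1/2) * w^(2*k)
      = ∫ w in (0:ℝ)..1, (1-w^2)^(μ-1/2) * w^(2*k) := by
    have := intervalIntegral.integral_comp_neg (a := (0:ℝ)) (b := 1)
      (fun w : ℝ => (1-w^2)^(μ-1/2) * w^(2*k))
    norm_num at this
    rw [← this]
  rw [← intervalIntegral.integral_add_adjacent_intervals h2 h1, hsym]
  have hval : ∫ w in (0:ℝ)..1, (1-w^2)^(μ-1/2) * w^(2*k)
      = (1/2) * (Real.Gamma ((k:ℝ)+1/2) * Real.Gamma (μ+1/2) / Real.Gamma (μ+k+1)) := by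
    rw [intervalIntegral.integral_of_le (by norm_num : (0:ℝ) ≤ 1),
      MeasureTheory.integral_Ioc_eq_integral_Ioo, (half_subst μ hμ k).2,
      ← MeasureTheory.integral_Ioc_eq_integral_Ioo,
      ← intervalIntegral.integral_of_le (by norm_num : (0:ℝ) ≤ 1),
      real_beta (by positivity : (0:ℝ) < (k:ℝ)+1/2) (by linarith : (0:ℝ) < μ+1/2)]
    rw [show (k:ℝ)+1/2 + (μ+1/2) = μ+k+1 by ring]
  rw [hval]
  ring

lemma interchange (μ z : ℝ) (hμ : -1/2 < μ) :
    ∫ w in (-1:ℝ)..1, (1-w^2)^(μ-1/2) * Real.cos (z*w)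
      = ∑' k : ℕ, ((-1)^k * z^(2*k) / (2*k).factorial)
          * ∫ w in (-1:ℝ)..1, (1-w^2)^(μ-1/2) * w^(2*k) := by
  set ν := volume.restrict (Ioo (-1:ℝ) 1) with hν
  set F : ℕ → ℝ → ℝ := fun k w =>
    ((-1)^k * z^(2*k) / (2*k).factorial) * ((1-w^2)^(μ-1/2) * w^(2*k)) with hF
  have hbase : ∀ k : ℕ, IntegrableOn (fun w : ℝ => (1-w^2)^(μ-1/2) * w^(2*k)) (Ioo (-1) 1) :=
    fun k => (intervalIntegrable_iff_integrableOn_Ioo_of_le (by norm_num)).mp (Ik_intInt μ hμ k)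
  have hFk : ∀ k : ℕ, Integrable (F k) ν := fun k => (hbase k).const_mul _
  have hG : IntegrableOn (fun w : ℝ => (1-w^2)^(μ-1/2)) (Ioo (-1) 1) := by
    have := hbase 0
    simpa using this
  have hb : ∀ k : ℕ, ∫ w in Ioo (-1:ℝ) 1, ‖F k w‖
      ≤ (|z|^(2*k) / (2*k).factorial) * ∫ w in Ioo (-1:ℝ) 1, (1-w^2)^(μ-1/2) := by
    intro k
    have h1 : ∀ w ∈ Ioo (-1:ℝ) 1, ‖F k w‖
        ≤ (|z|^(2*k) / (2*k).factorial) * (1-w^2)^(μ-1/2) := by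
      intro w hw
      have hw2 : (0:ℝ) < 1 - w^2 := by nlinarith [hw.1, hw.2]
      have hG0 : (0:ℝ) < (1-w^2)^(μ-1/2) := Real.rpow_pos_of_pos hw2 _
      have hwabs : |w| ≤ 1 := by rw [abs_le]; exact ⟨hw.1.le, hw.2.le⟩
      have : ‖F k w‖ = (|z|^(2*k) / (2*k).factorial) * ((1-w^2)^(μ-1/2) * |w|^(2*k)) := by
        simp only [hF, Real.norm_eq_abs, abs_mul, abs_div, abs_pow, abs_neg, abs_one, one_pow,
          one_mul, Nat.abs_cast, abs_of_pos hG0]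
      rw [this]
      have h2 : |w|^(2*k) ≤ 1 := pow_le_one₀ (abs_nonneg w) hwabs
      have h3 : (1-w^2)^(μ-1/2) * |w|^(2*k) ≤ (1-w^2)^(μ-1/2) := by
        nlinarith [pow_nonneg (abs_nonneg w) (2*k)]
      have h4 : (0:ℝ) ≤ |z|^(2*k) / (2*k).factorial := by positivity
      exact mul_le_mul_of_nonneg_left h3 h4
    calc ∫ w in Ioo (-1:ℝ) 1, ‖F k w‖
        ≤ ∫ w in Ioo (-1:ℝ) 1, (|z|^(2*k) / (2*k).factorial) * (1-w^2)^(μ-1/2) := by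
          refine setIntegral_mono_on (hFk k).norm (hG.const_mul _) measurableSet_Ioo h1
      _ = (|z|^(2*k) / (2*k).factorial) * ∫ w in Ioo (-1:ℝ) 1, (1-w^2)^(μ-1/2) := by
          rw [MeasureTheory.integral_const_mul]
  have hsummable : Summable fun k : ℕ => (|z|^(2*k) / (2*k).factorial)
      * ∫ w in Ioo (-1:ℝ) 1, (1-w^2)^(μ-1/2) := by
    apply Summable.mul_right
    have h := (Real.summable_pow_div_factorial |z|).comp_injective
      (fun a b hab => by simpa using hab : Function.Injective (fun k : ℕ => 2*k))
    exact h
  have hsum : Summable fun k : ℕ => ∫ w, ‖F k w‖ ∂ν := by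
    refine Summable.of_nonneg_of_le (fun k => ?_) (fun k => ?_) hsummable
    · exact integral_nonneg fun w => norm_nonneg _
    · exact hb k
  have key := MeasureTheory.integral_tsum_of_summable_integral_norm hFk hsum
  have hpt : ∀ w : ℝ, ∑' k : ℕ, F k w = (1-w^2)^(μ-1/2) * Real.cos (z*w) := by
    intro w
    rw [← (Real.hasSum_cos (z*w)).tsum_eq, ← tsum_mul_left]
    congr 1
    funext k
    simp only [hF]
    rw [mul_pow]
    ring
  rw [intervalIntegral.integral_of_le (by norm_num : (-1:ℝ) ≤ 1),
    MeasureTheory.integral_Ioc_eq_integral_Ioo]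
  rw [show (fun w : ℝ => (1-w^2)^(μ-1/2) * Real.cos (z*w))
    = fun w => ∑' k : ℕ, F k w from (funext fun w => (hpt w).symm)]
  rw [← key]
  congr 1
  funext k
  rw [intervalIntegral.integral_of_le (by norm_num : (-1:ℝ) ≤ 1),
    MeasureTheory.integral_Ioc_eq_integral_Ioo, hν, ← MeasureTheory.integral_const_mul]

theorem stmt_15 (μ z : ℝ) (hμ : -1/2 < μ) :
    besselJ μ z = ((z / 2) ^ μ / (Real.sqrt Real.pi * Real.Gamma (μ + 1/2))) *
      ∫ w in (-1:ℝ)..1, (1 - w ^ 2) ^ (μ - 1/2) * Real.cos (z * w) := by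
  have hfac : besselJ μ z
      = ∑' k : ℕ, (z/2)^μ * ((-1)^k * ((z/2)^2)^k / (k.factorial * Real.Gamma (μ+k+1))) := by
    rw [besselJ]
    congr 1
    funext k
    rw [rpow_split hμ]
    ring
  rw [hfac, interchange μ z hμ, ← tsum_mul_left]
  congr 1
  funext k
  rw [Ik_val μ hμ k, gamma_nat_add_half k]
  have h1 : Real.sqrt π ≠ 0 := ne_of_gt (Real.sqrt_pos.mpr Real.pi_pos)
  have h2 : Real.Gamma (μ+1/2) ≠ 0 := ne_of_gt (Real.Gamma_pos_of_pos (by linarith))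
  have hk0 : (0:ℝ) ≤ k := Nat.cast_nonneg k
  have h3 : Real.Gamma (μ+k+1) ≠ 0 := ne_of_gt (Real.Gamma_pos_of_pos (by linarith))
  have h4 : ((2*k).factorial : ℝ) ≠ 0 := Nat.cast_ne_zero.mpr (Nat.factorial_ne_zero _)
  have h5 : (k.factorial : ℝ) ≠ 0 := Nat.cast_ne_zero.mpr (Nat.factorial_ne_zero _)
  have h6 : (4:ℝ)^k ≠ 0 := by positivity
  have h7 : ((z/2)^2)^k = z^(2*k)/4^k := by
    rw [pow_mul, div_pow, div_pow]
    norm_num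
  have hD1 : (4:ℝ)^k * ((k.factorial : ℝ) * Real.Gamma (μ+k+1)) ≠ 0 := by
    exact mul_ne_zero h6 (mul_ne_zero h5 h3)
  have hD2 : (Real.sqrt π * Real.Gamma (μ+1/2))
      * (((2*k).factorial : ℝ) * ((4:ℝ)^k * (k.factorial : ℝ)) * Real.Gamma (μ+k+1)) ≠ 0 := by
    exact mul_ne_zero (mul_ne_zero h1 h2) (mul_ne_zero (mul_ne_zero h4 (mul_ne_zero h6 h5)) h3)
  rw [h7]
  trans ((z/2)^μ * ((-1)^k * z^(2*k)))
      / ((4:ℝ)^k * ((k.factorial : ℝ) * Real.Gamma (μ+k+1)))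
  · ring
  trans ((z/2)^μ * ((-1)^k * z^(2*k)) * (Real.sqrt π * ((2*k).factorial : ℝ)
        * Real.Gamma (μ+1/2)))
      / ((Real.sqrt π * Real.Gamma (μ+1/2))
        * (((2*k).factorial : ℝ) * ((4:ℝ)^k * (k.factorial : ℝ)) * Real.Gamma (μ+k+1)))
  · rw [div_eq_div_iff hD1 hD2]
    ring
  · ring
end
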